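/- Let ℓ ≥ 1 be an integer. If a bipartite graph G with parts U and V contains no cycle of length at most 4ℓ+2, then G contains no subdivision pattern of C_{2ℓ+1} of the following kind: there do not exist vertices u₁,...,u_k ∈ U and a decomposition of the edge set of C_{2ℓ+1} into bipartite subgraphs H₁,...,H_k with pairwise at most one common vertex, such that u_i is adjacent in G to (images of) all vertices of H_i. In particular, the 1-subdivision of C_{2ℓ+1}, which is the cycle C_{4ℓ+2}, is not a subgraph of G. -/

import Mathlib

open SimpleGraph
open Fin.NatCast Fin.CommRing

private lemma walk_of_fun {W : Type*} (G : SimpleGraph W) (g : ℕ → W) :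
    ∀ n : ℕ, (∀ j < n, G.Adj (g j) (g (j+1))) →
    ∃ w : G.Walk (g 0) (g n), w.length = n ∧
      w.edges = (List.range n).map (fun j => s(g j, g (j+1)))
  | 0, _ => ⟨.nil, rfl, rfl⟩
  | (n+1), h => by
      obtain ⟨w, hl, he⟩ := walk_of_fun G g n (fun j hj => h j (by omega))
      refine ⟨w.concat (h n (by omega)), ?_, ?_⟩
      · rw [SimpleGraph.Walk.length_concat, hl]
      · rw [SimpleGraph.Walk.edges_concat, he, List.range_succ, List.map_append]
        simp

private lemma exists_cycle_of_fun {W : Type*} {G : SimpleGraph W} (g : ℕ → W) (n : ℕ)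
    (hn : 1 ≤ n)
    (hadj : ∀ j < n, G.Adj (g j) (g (j+1)))
    (hclosed : g n = g 0)
    (huniq : ∀ j, 1 ≤ j → j < n → s(g j, g (j+1)) ≠ s(g 0, g 1)) :
    ∃ (x : W) (c : G.Walk x x), c.IsCycle ∧ c.length ≤ n := by
  classical
  obtain ⟨w, hl, he⟩ := walk_of_fun G (fun j => g (j+1)) (n-1)
    (fun j hj => hadj (j+1) (by omega))
  have hend : g ((n-1) + 1) = g 0 := by rw [Nat.sub_add_cancel hn, hclosed]
  let w' : G.Walk (g 1) (g 0) := w.copy rfl hend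
  have hadj0 : G.Adj (g 0) (g 1) := hadj 0 hn
  have hne : s(g 0, g 1) ∉ w'.bypass.edges := by
    intro hmem
    have h2 := w'.edges_bypass_subset hmem
    have h3 : w'.edges = w.edges := SimpleGraph.Walk.edges_copy _ _ _
    rw [h3, he, List.mem_map] at h2
    obtain ⟨j, hj, hj2⟩ := h2
    rw [List.mem_range] at hj
    exact huniq (j+1) (by omega) (by omega) hj2
  refine ⟨g 0, SimpleGraph.Walk.cons hadj0 w'.bypass, ?_, ?_⟩
  · rw [SimpleGraph.Walk.cons_isCycle_iff]
    exact ⟨SimpleGraph.Walk.bypass_isPath _, hne⟩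
  · rw [SimpleGraph.Walk.length_cons]
    have h4 : w'.bypass.length ≤ w'.length := SimpleGraph.Walk.length_bypass_le _
    have h5 : w'.length = n - 1 := by
      rw [SimpleGraph.Walk.length_copy, hl]
    omega

private lemma cycleGraph_adj_succ {n : ℕ} [NeZero n] (hn : 2 ≤ n) (x : Fin n) :
    (SimpleGraph.cycleGraph n).Adj x (x+1) := by
  rw [SimpleGraph.cycleGraph_adj']
  right
  rw [add_sub_cancel_left]
  obtain ⟨m, hm⟩ : ∃ m, n = m + 2 := ⟨n - 2, by omega⟩
  subst hm
  simp [Fin.val_one]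

private lemma odd_cycle_not_two_colorable {n : ℕ} [NeZero n] (hn : 3 ≤ n) (hodd : Odd n) :
    ¬ (SimpleGraph.cycleGraph n).Colorable 2 := by
  rintro ⟨c⟩
  have hkey : ∀ a b : Fin 2, a ≠ b → a = b + 1 := by decide
  have hstep : ∀ x : Fin n, c (x + 1) = c x + 1 := fun x =>
    hkey _ _ (c.valid (cycleGraph_adj_succ (by omega) x).symm)
  have halt : ∀ m : ℕ, c ((m : ℕ) : Fin n) = c 0 + (m : Fin 2) := by
    intro m
    induction m with
    | zero => simp
    | succ p ih =>
        push_cast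
        rw [hstep, ih]
        ring
  have h0 := halt n
  rw [Fin.natCast_self] at h0
  have h1 : ((n : ℕ) : Fin 2) = 1 := by
    ext
    rw [Fin.val_natCast, Nat.odd_iff.mp hodd, Fin.val_one]
  rw [h1] at h0
  revert h0
  generalize c 0 = a
  revert a
  decide

private lemma fin_eq_one_of_val {n : ℕ} [NeZero n] (hn : 2 ≤ n) {x : Fin n}
    (h : x.val = 1) : x = 1 := by
  obtain ⟨m, hm⟩ : ∃ m, n = m + 2 := ⟨n - 2, by omega⟩
  subst hm
  ext
  simp [h, Fin.val_one]

/-- A bipartite graph of girth greater than `4ℓ+2` is `L(C_{2ℓ+1})`-free (the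
observation used in Theorem 3 of the paper): it contains no copy of any graph
`J(H₁,…,H_k)` arising from a decomposition of the edges of `C_{2ℓ+1}` into
edge-disjoint bipartite subgraphs `H₁,…,H_k`, each containing an edge and pairwise
sharing at most one vertex, where the vertex `uᵢ ∈ U` is joined to (the images of)
all vertices of `Hᵢ`. In particular, the 1-subdivision of `C_{2ℓ+1}`, which is the
cycle `C_{4ℓ+2}`, is not a subgraph of `G`. -/
theorem stmt_19 {W : Type*} (ℓ : ℕ) (hℓ : 1 ≤ ℓ) (G : SimpleGraph W) (U V : Set W)
    (hdisj : Disjoint U V) (hcover : U ∪ V = Set.univ)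
    (hbip : ∀ x y, G.Adj x y → (x ∈ U ∧ y ∈ V) ∨ (x ∈ V ∧ y ∈ U))
    (hgirth : ∀ (w : W) (c : G.Walk w w), c.IsCycle → 4 * ℓ + 2 < c.length) :
    (¬ ∃ (k : ℕ) (u : Fin k → W) (Hs : Fin k → SimpleGraph (Fin (2 * ℓ + 1)))
        (φ : Fin (2 * ℓ + 1) → W),
          Function.Injective u ∧ (∀ i, u i ∈ U) ∧
          Function.Injective φ ∧ (∀ x, φ x ∈ V) ∧
          (∀ i, Hs i ≤ SimpleGraph.cycleGraph (2 * ℓ + 1)) ∧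
          (∀ i, ∃ e, e ∈ (Hs i).edgeSet) ∧
          (∀ i, (Hs i).Colorable 2) ∧
          (∀ e ∈ (SimpleGraph.cycleGraph (2 * ℓ + 1)).edgeSet,
            ∃! i : Fin k, e ∈ (Hs i).edgeSet) ∧
          (∀ i j, i ≠ j → Set.Subsingleton ((Hs i).support ∩ (Hs j).support)) ∧
          (∀ i x, x ∈ (Hs i).support → G.Adj (u i) (φ x))) ∧
      (¬ ∃ f : Fin (4 * ℓ + 2) → W, Function.Injective f ∧
        ∀ a b, (SimpleGraph.cycleGraph (4 * ℓ + 2)).Adj a b → G.Adj (f a) (f b)) := by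
  constructor
  · rintro ⟨k, u, Hs, φ, hu_inj, hu_U, hφ_inj, hφ_V, hle, -, hcol, hun, -, hadjG⟩
    haveI : NeZero (2 * ℓ + 1) := ⟨by omega⟩
    have hCadj : ∀ x : Fin (2 * ℓ + 1), (cycleGraph (2 * ℓ + 1)).Adj x (x + 1) :=
      cycleGraph_adj_succ (by omega)
    choose I hI hIu using fun x : Fin (2 * ℓ + 1) =>
      hun s(x, x + 1) ((SimpleGraph.mem_edgeSet _).mpr (hCadj x))
    have hIadj : ∀ x, (Hs (I x)).Adj x (x + 1) := fun x => (SimpleGraph.mem_edgeSet _).mp (hI x)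
    have hUV : ∀ i x, u i ≠ φ x := by
      intro i x h
      exact (Set.disjoint_left.mp hdisj (hu_U i)) (h ▸ hφ_V x)
    have hAdj1 : ∀ x, G.Adj (u (I x)) (φ x) := fun x =>
      hadjG _ _ ((SimpleGraph.mem_support _).mpr ⟨_, hIadj x⟩)
    have hAdj2 : ∀ x, G.Adj (u (I x)) (φ (x + 1)) := fun x =>
      hadjG _ _ ((SimpleGraph.mem_support _).mpr ⟨_, (hIadj x).symm⟩)
    -- I is not "locally constant" everywhere
    have hx0 : ∃ x0 : Fin (2 * ℓ + 1), I x0 ≠ I (x0 + 1) := by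
      by_contra hc
      push_neg at hc
      have hconst : ∀ m : ℕ, I ((m : ℕ) : Fin (2 * ℓ + 1)) = I 0 := by
        intro m
        induction m with
        | zero => simp
        | succ p ih => push_cast; rw [← hc]; exact ih
      have hallI : ∀ x : Fin (2 * ℓ + 1), I x = I 0 := fun x => by
        have := hconst x.val
        rwa [Fin.cast_val_eq_self] at this
      have hge : cycleGraph (2 * ℓ + 1) ≤ Hs (I 0) := by
        intro a b hab
        rw [SimpleGraph.cycleGraph_adj'] at hab
        rcases hab with h | h
        · have h2 : a - b = 1 := fin_eq_one_of_val (by omega) h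
          have h3 : a = b + 1 := by
            rw [sub_eq_iff_eq_add] at h2; rw [h2]; ring
          have := hIadj b
          rw [hallI b] at this
          rw [h3]
          exact this.symm
        · have h2 : b - a = 1 := fin_eq_one_of_val (by omega) h
          have h3 : b = a + 1 := by
            rw [sub_eq_iff_eq_add] at h2; rw [h2]; ring
          have := hIadj a
          rw [hallI a] at this
          rw [h3]
          exact this
      have heq : Hs (I 0) = cycleGraph (2 * ℓ + 1) := le_antisymm (hle _) hge
      have hcontr := hcol (I 0)
      rw [heq] at hcontr
      exact odd_cycle_not_two_colorable (by omega) ⟨ℓ, by ring⟩ hcontr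
    obtain ⟨x0, hx0⟩ := hx0
    set s : Fin (2 * ℓ + 1) := x0 + 1 with hs
    set q : ℕ → Fin (2 * ℓ + 1) := fun j => ((j / 2 : ℕ) : Fin (2 * ℓ + 1)) + s with hq
    set g : ℕ → W := fun j => if j % 2 = 0 then φ (q j) else u (I (q j)) with hg
    have geven : ∀ j, j % 2 = 0 → g j = φ (q j) := by intro j h; rw [hg]; simp [h]
    have godd : ∀ j, j % 2 = 1 → g j = u (I (q j)) := by intro j h; rw [hg]; simp [h]
    have hqsucc_even : ∀ j, j % 2 = 0 → q (j + 1) = q j := by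
      intro j h; rw [hq]; simp only; rw [(by omega : (j + 1) / 2 = j / 2)]
    have hqsucc_odd : ∀ j, j % 2 = 1 → q (j + 1) = q j + 1 := by
      intro j h
      rw [hq]; simp only
      rw [(by omega : (j + 1) / 2 = j / 2 + 1)]
      push_cast
      ring
    have hadjN : ∀ j < 2 * (2 * ℓ + 1), G.Adj (g j) (g (j + 1)) := by
      intro j hj
      rcases Nat.even_or_odd j with he | ho
      · have h1 : j % 2 = 0 := Nat.even_iff.mp he
        rw [geven j h1, godd (j + 1) (by omega), hqsucc_even j h1]
        exact (hAdj1 _).symm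
      · have h1 : j % 2 = 1 := Nat.odd_iff.mp ho
        rw [godd j h1, geven (j + 1) (by omega), hqsucc_odd j h1]
        exact hAdj2 _
    have hq0 : q 0 = s := by rw [hq]; simp
    have hq1 : q 1 = s := by rw [hq]; simp
    have hg0 : g 0 = φ s := by rw [geven 0 (by omega), hq0]
    have hg1 : g 1 = u (I s) := by rw [godd 1 (by omega), hq1]
    have hclosedN : g (2 * (2 * ℓ + 1)) = g 0 := by
      rw [geven _ (by omega), hg0]
      congr 1
      rw [hq]; simp only
      rw [(by omega : 2 * (2 * ℓ + 1) / 2 = 2 * ℓ + 1)]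
      simp
    have huniqN : ∀ j, 1 ≤ j → j < 2 * (2 * ℓ + 1) →
        s(g j, g (j + 1)) ≠ s(g 0, g 1) := by
      intro j hj1 hjN heq
      rw [hg0, hg1] at heq
      rcases Nat.even_or_odd j with he | ho
      · have h1 : j % 2 = 0 := Nat.even_iff.mp he
        rw [geven j h1, godd (j + 1) (by omega), hqsucc_even j h1, Sym2.eq_iff] at heq
        rcases heq with ⟨e1, e2⟩ | ⟨e1, e2⟩
        · have h2 : q j = s := hφ_inj e1
          rw [hq] at h2
          simp only at h2
          have h3 : ((j / 2 : ℕ) : Fin (2 * ℓ + 1)) = 0 := by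
            have := add_right_cancel (h2.trans (zero_add s).symm)
            exact this
          have h4 := Nat.le_of_dvd (by omega) (Fin.natCast_eq_zero.mp h3)
          omega
        · exact hUV _ _ e2
      · have h1 : j % 2 = 1 := Nat.odd_iff.mp ho
        rw [godd j h1, geven (j + 1) (by omega), hqsucc_odd j h1, Sym2.eq_iff] at heq
        rcases heq with ⟨e1, e2⟩ | ⟨e1, e2⟩
        · exact hUV _ _ e1
        · have h2 : q j + 1 = s := hφ_inj e2
          have h3 : q j = x0 := by
            rw [hs] at h2
            exact add_right_cancel h2
          have h4 : I (q j) = I s := hu_inj e1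
          rw [h3, hs] at h4
          exact hx0 h4
    obtain ⟨x, c, hc, hlen⟩ := exists_cycle_of_fun g (2 * (2 * ℓ + 1))
      (by omega) hadjN hclosedN huniqN
    have := hgirth x c hc
    omega
  · rintro ⟨f, hf, hhom⟩
    haveI : NeZero (4 * ℓ + 2) := ⟨by omega⟩
    set g : ℕ → W := fun j => f ((j : ℕ) : Fin (4 * ℓ + 2)) with hgdef
    have hadj : ∀ j < 4 * ℓ + 2, G.Adj (g j) (g (j+1)) := by
      intro j hj
      have h : ((j+1 : ℕ) : Fin (4 * ℓ + 2)) = ((j : ℕ) : Fin (4 * ℓ + 2)) + 1 := by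
        push_cast; ring
      rw [hgdef]
      simp only [h]
      exact hhom _ _ (cycleGraph_adj_succ (by omega) _)
    have hclosed : g (4 * ℓ + 2) = g 0 := by rw [hgdef]; simp
    have huniq : ∀ j, 1 ≤ j → j < 4 * ℓ + 2 →
        s(g j, g (j+1)) ≠ s(g 0, g 1) := by
      intro j hj1 hjm heq
      rw [hgdef] at heq
      simp only [] at heq
      rw [Sym2.eq_iff] at heq
      rcases heq with ⟨h1, h2⟩ | ⟨h1, h2⟩
      · have e1 : ((j : ℕ) : Fin (4 * ℓ + 2)) = ((0 : ℕ) : Fin (4 * ℓ + 2)) := hf h1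
        rw [Nat.cast_zero] at e1
        have := Nat.le_of_dvd (by omega) (Fin.natCast_eq_zero.mp e1)
        omega
      · have e1 : ((j : ℕ) : Fin (4 * ℓ + 2)) = ((1 : ℕ) : Fin (4 * ℓ + 2)) := hf h1
        have e2 : ((j+1 : ℕ) : Fin (4 * ℓ + 2)) = ((0 : ℕ) : Fin (4 * ℓ + 2)) := hf h2
        rw [Nat.cast_zero] at e2
        have d2 := Fin.natCast_eq_zero.mp e2
        have e3 : ((j - 1 : ℕ) : Fin (4 * ℓ + 2)) = 0 := by
          rw [Nat.cast_sub hj1, e1]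
          push_cast
          ring
        have d3 := Fin.natCast_eq_zero.mp e3
        rcases Nat.eq_zero_or_pos (j - 1) with h0 | h0
        · have hd : (4 * ℓ + 2) ∣ 2 := by
            have hj2 : j + 1 = 2 := by omega
            rwa [hj2] at d2
          have := Nat.le_of_dvd (by omega) hd
          omega
        · have := Nat.le_of_dvd h0 d3
          omega
    obtain ⟨x, c, hc, hlen⟩ := exists_cycle_of_fun g (4 * ℓ + 2)
      (by omega) hadj hclosed huniq
    have := hgirth x c hc
    omega
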